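/- For every integer m ≥ 1, the set of m-ultra numbers is a dense G_δ subset of ℝ (a countable intersection of dense open sets). -/

import Mathlib

open Polynomial

/-- The primitive minimal polynomial over ℤ of a real number. -/
noncomputable def intMinpoly (α : ℝ) : Polynomial ℤ :=
  (IsLocalization.integerNormalization (nonZeroDivisors ℤ) (minpoly ℚ α)).primPart

/-- The height of an algebraic number: the maximum of the absolute values of the
coefficients of its primitive minimal polynomial over ℤ. -/
noncomputable def algHeight (α : ℝ) : ℕ :=
  (intMinpoly α).support.sup fun i => ((intMinpoly α).coeff i).natAbs

/-- `α` is a real algebraic number of degree exactly `m`. -/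
def DegreeExactly (m : ℕ) (α : ℝ) : Prop :=
  IsAlgebraic ℚ α ∧ (minpoly ℚ α).natDegree = m

/-- `exp^[3](x) = e^(e^(e^x))`. -/
noncomputable def expCube (x : ℝ) : ℝ := Real.exp (Real.exp (Real.exp x))

/-- `ξ` is an `m`-ultra number: there is a sequence `(α_n)_{n ≥ 1}` of pairwise distinct
real algebraic numbers of degree exactly `m` with
`0 < |ξ - α_n| < (exp^[3](H(α_n)))^{-n}` for all `n ≥ 1`. Here `a k` plays the
role of `α_{k+1}`. -/
def IsMUltra (m : ℕ) (ξ : ℝ) : Prop :=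
  ∃ a : ℕ → ℝ, Function.Injective a ∧
    ∀ n : ℕ, DegreeExactly m (a n) ∧ 0 < |ξ - a n| ∧
      |ξ - a n| < (expCube (algHeight (a n)))⁻¹ ^ (n + 1)

/-- A function `f : ℝ → ℝ` is transcendental if the only complex two-variable polynomial
`P` with `P (x, f x) = 0` for all real `x` is the zero polynomial. -/
def TranscendentalFun (f : ℝ → ℝ) : Prop :=
  ∀ P : MvPolynomial (Fin 2) ℂ,
    (∀ x : ℝ, MvPolynomial.eval ![(x : ℂ), (f x : ℂ)] P = 0) → P = 0

lemma two_le_expCube {x : ℝ} (hx : 0 ≤ x) : 2 ≤ expCube x := by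
  have h1 : (1:ℝ) ≤ Real.exp x := Real.one_le_exp hx
  have h2 : (2:ℝ) ≤ Real.exp (Real.exp x) := by
    have := Real.add_one_le_exp (1:ℝ)
    have := Real.exp_le_exp.mpr h1
    linarith
  have := Real.add_one_le_exp (Real.exp (Real.exp x))
  unfold expCube
  linarith

lemma expCube_pos (x : ℝ) : 0 < expCube x := Real.exp_pos _

lemma inv_expCube_le_half {x : ℝ} (hx : 0 ≤ x) : (expCube x)⁻¹ ≤ 1/2 := by
  rw [show (1:ℝ)/2 = 2⁻¹ by norm_num]
  exact inv_anti₀ (by norm_num) (two_le_expCube hx)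

-- irreducibility of X^m - 2 over ℚ
lemma irr_test (m : ℕ) (hm : 1 ≤ m) : Irreducible ((X : ℚ[X]) ^ m - C 2) := by
  have hmonic : ((X : ℤ[X]) ^ m - C 2).Monic := monic_X_pow_sub_C 2 (by omega)
  have hirrZ : Irreducible ((X : ℤ[X]) ^ m - C 2) := by
    apply irreducible_of_eisenstein_criterion
      (P := Ideal.span {(2:ℤ)}) ((Ideal.span_singleton_prime (by norm_num)).mpr Int.prime_two)
    · rw [hmonic.leadingCoeff]
      rw [Ideal.mem_span_singleton]
      norm_num
    · intro n hn
      rw [degree_X_pow_sub_C (by omega) 2] at hn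
      have hnm : n < m := by exact_mod_cast hn
      rw [Ideal.mem_span_singleton]
      simp only [coeff_sub, coeff_X_pow, coeff_C]
      rcases eq_or_ne n 0 with rfl | h
      · simp [hnm.ne]
      · rw [if_neg h, if_neg (by omega : n ≠ m)]; simp
    · rw [degree_X_pow_sub_C (by omega) 2]
      exact_mod_cast (by omega : 0 < m)
    · rw [Ideal.span_singleton_pow, Ideal.mem_span_singleton]
      have h0m : ¬ (0 = m) := by omega
      simp only [coeff_sub, coeff_X_pow, coeff_C, if_pos rfl, h0m, if_false, zero_sub]
      decide
    · exact hmonic.isPrimitive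
  have := (hmonic.irreducible_iff_irreducible_map_fraction_map (K := ℚ)).mp hirrZ
  simpa [Polynomial.map_sub, Polynomial.map_pow, C_ofNat] using this

lemma minpoly_root2 (m : ℕ) (hm : 1 ≤ m) :
    minpoly ℚ ((2:ℝ) ^ ((m:ℝ))⁻¹) = (X : ℚ[X]) ^ m - C 2 := by
  have hmonic : ((X : ℚ[X]) ^ m - C 2).Monic := monic_X_pow_sub_C 2 (by omega)
  have hroot : ((2:ℝ) ^ ((m:ℝ))⁻¹) ^ m = 2 :=
    Real.rpow_inv_natCast_pow (by norm_num) (by omega)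
  refine (minpoly.eq_of_irreducible_of_monic (irr_test m hm) ?_ hmonic).symm
  simp [hroot]

lemma dense_degreeExactly (m : ℕ) (hm : 1 ≤ m) : Dense {α : ℝ | DegreeExactly m α} := by
  set β : ℝ := (2:ℝ) ^ ((m:ℝ))⁻¹ with hβ
  have hβint : IsIntegral ℚ β := by
    refine ⟨(X : ℚ[X]) ^ m - C 2, monic_X_pow_sub_C 2 (by omega), ?_⟩
    have hroot : β ^ m = 2 := Real.rpow_inv_natCast_pow (by norm_num) (by omega)
    simp [eval₂_sub, hroot]
  have hdeg : ∀ q : ℚ, DegreeExactly m ((q:ℝ) + β) := by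
    intro q
    constructor
    · have : IsIntegral ℚ ((q:ℝ)) := isIntegral_algebraMap (x := q)
      exact (this.add hβint).isAlgebraic
    · have h1 : (q:ℝ) + β = β + algebraMap ℚ ℝ q := by
        simp [add_comm]
      rw [h1, minpoly.add_algebraMap, natDegree_comp, natDegree_X_sub_C, mul_one,
        minpoly_root2 m hm, natDegree_X_pow_sub_C]
  have hdr : DenseRange (fun q : ℚ => (q:ℝ) + β) := by
    have h1 : DenseRange ((↑) : ℚ → ℝ) := Rat.denseRange_cast
    have h2 : (fun q : ℚ => (q:ℝ) + β) = (fun x : ℝ => x + β) ∘ ((↑) : ℚ → ℝ) := rfl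
    rw [h2]
    exact ((Homeomorph.addRight β).surjective.denseRange).comp h1 (continuous_add_right β)
  refine Dense.mono ?_ hdr
  rintro x ⟨q, rfl⟩
  exact hdeg q

def UltraGood (m n : ℕ) (ξ α : ℝ) : Prop :=
  DegreeExactly m α ∧ 0 < |ξ - α| ∧ |ξ - α| < (expCube (algHeight α))⁻¹ ^ (n + 1)

def USet (m n : ℕ) : Set ℝ := {ξ | ∃ α, UltraGood m n ξ α}

lemma step (m : ℕ) (ξ : ℝ) (h : ∀ n : ℕ, ξ ∈ USet m n) {d : ℝ} (hd : 0 < d) (k : ℕ) :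
    ∃ β, UltraGood m k ξ β ∧ |ξ - β| < d := by
  obtain ⟨N, hN⟩ := exists_pow_lt_of_lt_one hd (by norm_num : (1:ℝ)/2 < 1)
  set n := max k N with hn
  obtain ⟨α, hα1, hα2, hα3⟩ := h n
  set c := (expCube (algHeight α))⁻¹ with hc
  have hc0 : 0 ≤ c := le_of_lt (inv_pos.mpr (expCube_pos _))
  have hch : c ≤ 1/2 := inv_expCube_le_half (Nat.cast_nonneg _)
  have hb1 : c ^ (n+1) ≤ c ^ (k+1) :=
    pow_le_pow_of_le_one hc0 (hch.trans (by norm_num)) (by omega)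
  have hb2 : c ^ (n+1) ≤ (1/2 : ℝ) ^ (n+1) := pow_le_pow_left₀ hc0 hch _
  have hb3 : ((1:ℝ)/2) ^ (n+1) ≤ (1/2 : ℝ) ^ N :=
    pow_le_pow_of_le_one (by norm_num) (by norm_num) (by omega)
  exact ⟨α, ⟨hα1, hα2, lt_of_lt_of_le hα3 hb1⟩,
    lt_of_lt_of_le hα3 (hb2.trans hb3) |>.trans hN⟩

noncomputable def ultraSeq (m : ℕ) (ξ : ℝ) (h : ∀ n : ℕ, ξ ∈ USet m n) :
    (k : ℕ) → {β : ℝ // UltraGood m k ξ β}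
  | 0 => ⟨(step m ξ h one_pos 0).choose, (step m ξ h one_pos 0).choose_spec.1⟩
  | (k+1) =>
      ⟨(step m ξ h (ultraSeq m ξ h k).2.2.1 (k+1)).choose,
       (step m ξ h (ultraSeq m ξ h k).2.2.1 (k+1)).choose_spec.1⟩

lemma ultraSeq_dec (m : ℕ) (ξ : ℝ) (h : ∀ n : ℕ, ξ ∈ USet m n) (k : ℕ) :
    |ξ - (ultraSeq m ξ h (k+1)).1| < |ξ - (ultraSeq m ξ h k).1| := by
  have := (step m ξ h (ultraSeq m ξ h k).2.2.1 (k+1)).choose_spec.2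
  rw [ultraSeq]
  exact this

lemma isMUltra_iff_mem (m : ℕ) (ξ : ℝ) : IsMUltra m ξ ↔ ∀ n : ℕ, ξ ∈ USet m n := by
  constructor
  · rintro ⟨a, _, ha⟩ n
    exact ⟨a n, ha n⟩
  · intro h
    refine ⟨fun k => (ultraSeq m ξ h k).1, ?_, fun k => (ultraSeq m ξ h k).2⟩
    have hanti : StrictAnti (fun k => |ξ - (ultraSeq m ξ h k).1|) :=
      strictAnti_nat_of_succ_lt (ultraSeq_dec m ξ h)
    intro i j hij
    by_contra hne
    exact absurd (congrArg (fun x => |ξ - x|) hij) (hanti.injective.ne hne)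

lemma isOpen_USet (m n : ℕ) : IsOpen (USet m n) := by
  have : USet m n = ⋃ α ∈ {α : ℝ | DegreeExactly m α},
      Metric.ball α ((expCube (algHeight α))⁻¹ ^ (n+1)) \ {α} := by
    ext ξ
    simp only [USet, UltraGood, Set.mem_setOf_eq, Set.mem_iUnion, Set.mem_diff,
      Metric.mem_ball, Set.mem_singleton_iff, Real.dist_eq]
    constructor
    · rintro ⟨α, h1, h2, h3⟩
      exact ⟨α, h1, h3, fun he => by simp [he] at h2⟩
    · rintro ⟨α, h1, h2, h3⟩
      exact ⟨α, h1, abs_pos.mpr (sub_ne_zero.mpr h3), h2⟩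
  rw [this]
  exact isOpen_biUnion fun α _ => Metric.isOpen_ball.sdiff isClosed_singleton

lemma dense_USet (m : ℕ) (hm : 1 ≤ m) (n : ℕ) : Dense (USet m n) := by
  rw [Metric.dense_iff]
  intro x r hr
  obtain ⟨α, hαball, hαdeg⟩ :=
    Metric.dense_iff.mp (dense_degreeExactly m hm) x (r/2) (by linarith)
  set c := (expCube (algHeight α))⁻¹ ^ (n+1) with hc
  have hc0 : 0 < c := pow_pos (inv_pos.mpr (expCube_pos _)) _
  set δ := min (r/2) c / 2 with hδ
  have hδ0 : 0 < δ := by positivity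
  have hδr : δ < r/2 := by
    have : min (r/2) c ≤ r/2 := min_le_left _ _
    simp only [hδ]; linarith
  have hδc : δ < c := by
    have : min (r/2) c ≤ c := min_le_right _ _
    simp only [hδ]; linarith
  refine ⟨α + δ, ?_, α, hαdeg, ?_, ?_⟩
  · rw [Metric.mem_ball, Real.dist_eq]
    rw [Metric.mem_ball, Real.dist_eq] at hαball
    have : |α + δ - x| ≤ |α - x| + |δ| := by
      have := abs_add_le (α - x) δ
      simpa [add_comm, add_assoc, add_sub_right_comm] using this
    rw [abs_of_pos hδ0] at this
    linarith
  · have e : α + δ - α = δ := by ring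
    rw [e, abs_of_pos hδ0]; exact hδ0
  · have e : α + δ - α = δ := by ring
    rw [e, abs_of_pos hδ0]; exact hδc

/-- The set of `m`-ultra numbers is a dense `G_δ` subset of `ℝ`. -/
theorem stmt_3 (m : ℕ) (hm : 1 ≤ m) :
    Dense {ξ : ℝ | IsMUltra m ξ} ∧ IsGδ {ξ : ℝ | IsMUltra m ξ} := by
  have hset : {ξ : ℝ | IsMUltra m ξ} = ⋂ n : ℕ, USet m n := by
    ext ξ
    simp [isMUltra_iff_mem, Set.mem_iInter]
  rw [hset]
  exact ⟨dense_iInter_of_isOpen (fun n => isOpen_USet m n) (fun n => dense_USet m hm n),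
    IsGδ.iInter_of_isOpen fun n => isOpen_USet m n⟩
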